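/- At the three real solutions β < −ρ < α < 0 < Φ(q) of ψ(λ) = q, the derivative of ψ satisfies ψ'(β) < 0, ψ'(α) < 0, and ψ'(Φ(q)) > 0. -/

import Mathlib

open Real Set

private lemma cubic_deriv_root (c b d e r s t : ℝ) (hrs : r ≠ s) (hrt : r ≠ t) (hst : s ≠ t)
    (Er : c*r^3 + b*r^2 + d*r + e = 0)
    (Es : c*s^3 + b*s^2 + d*s + e = 0)
    (Et : c*t^3 + b*t^2 + d*t + e = 0) :
    3*c*r^2 + 2*b*r + d = c*(r-s)*(r-t) := by
  have h1 : (r - s) * (c*(r^2+r*s+s^2) + b*(r+s) + d) = 0 := by linear_combination Er - Es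
  have hU : c*(r^2+r*s+s^2) + b*(r+s) + d = 0 :=
    (mul_eq_zero.mp h1).resolve_left (sub_ne_zero.mpr hrs)
  have h2 : (r - t) * (c*(r^2+r*t+t^2) + b*(r+t) + d) = 0 := by linear_combination Er - Et
  have hV : c*(r^2+r*t+t^2) + b*(r+t) + d = 0 :=
    (mul_eq_zero.mp h2).resolve_left (sub_ne_zero.mpr hrt)
  have h3 : (s - t) * (c*(r+s+t) + b) = 0 := by linear_combination hU - hV
  have hW : c*(r+s+t) + b = 0 :=
    (mul_eq_zero.mp h3).resolve_left (sub_ne_zero.mpr hst)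
  linear_combination hU + (r - s) * hW

private lemma deriv_psi (σ μ a ρ r : ℝ) (hne : ρ + r ≠ 0) :
    HasDerivAt (fun x : ℝ => σ ^ 2 / 2 * x ^ 2 + μ * x - a * x / (ρ + x))
      (σ ^ 2 * r + μ - a * ρ / (ρ + r) ^ 2) r := by
  have h1 : HasDerivAt (fun x : ℝ => σ ^ 2 / 2 * x ^ 2) (σ ^ 2 / 2 * (2 * r ^ 1)) r :=
    (hasDerivAt_pow 2 r).const_mul _
  have h2 : HasDerivAt (fun x : ℝ => μ * x) (μ * 1) r := (hasDerivAt_id r).const_mul μ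
  have h3 : HasDerivAt (fun x : ℝ => ρ + x) (0 + 1) r :=
    (hasDerivAt_const r ρ).add (hasDerivAt_id r)
  have h4 : HasDerivAt (fun x : ℝ => a * x) (a * 1) r := (hasDerivAt_id r).const_mul a
  have h6 := (h1.add h2).sub (h4.div h3 hne)
  convert h6 using 1
  · rfl
  · rfl
  · rfl
  ring

set_option maxHeartbeats 1600000 in
/-- With ψ(λ) = (σ²/2)λ² + μλ − aλ/(ρ+λ) and the three real solutions
β₀ < −ρ < α < 0 < Φ(q) of ψ(λ) = q, the derivative of ψ satisfies
ψ'(β₀) < 0, ψ'(α) < 0 and ψ'(Φ(q)) > 0. -/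
theorem stmt_5 (σ μ a ρ q β₀ α Φq : ℝ) (ψ : ℝ → ℝ)
    (hσ : 0 < σ) (hμ : 0 ≤ μ) (ha : 0 < a) (hρ : 0 < ρ) (hq : 0 < q)
    (hψ : ∀ lam : ℝ, ψ lam = σ ^ 2 / 2 * lam ^ 2 + μ * lam - a * lam / (ρ + lam))
    (hβρ : β₀ < -ρ) (hρα : -ρ < α) (hα0 : α < 0) (hΦ : 0 < Φq)
    (hrβ : ψ β₀ = q) (hrα : ψ α = q) (hrΦ : ψ Φq = q) :
    deriv ψ β₀ < 0 ∧ deriv ψ α < 0 ∧ 0 < deriv ψ Φq := by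
  have hfun : ψ = fun x : ℝ => σ ^ 2 / 2 * x ^ 2 + μ * x - a * x / (ρ + x) := funext hψ
  subst hfun
  set c : ℝ := σ ^ 2 / 2 with hc
  set b : ℝ := μ + σ ^ 2 * ρ / 2 with hb
  set d : ℝ := μ * ρ - a - q with hd
  set e : ℝ := -(q * ρ) with he
  have hcpos : 0 < c := by positivity
  -- nonvanishing of denominators at the three roots
  have hneβ : ρ + β₀ ≠ 0 := ne_of_lt (by linarith)
  have hneα : ρ + α ≠ 0 := ne_of_gt (by linarith)
  have hneΦ : ρ + Φq ≠ 0 := ne_of_gt (by linarith)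
  -- cubic root equations
  have root : ∀ r : ℝ, ρ + r ≠ 0 →
      σ ^ 2 / 2 * r ^ 2 + μ * r - a * r / (ρ + r) = q →
      c * r ^ 3 + b * r ^ 2 + d * r + e = 0 := by
    intro r hne hr
    have h2 : a * r / (ρ + r) = σ ^ 2 / 2 * r ^ 2 + μ * r - q := by linarith
    have h3 : a * r = (σ ^ 2 / 2 * r ^ 2 + μ * r - q) * (ρ + r) :=
      (div_eq_iff hne).mp h2
    rw [hc, hb, hd, he]
    linear_combination -h3
  have Eβ := root β₀ hneβ hrβ
  have Eα := root α hneα hrα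
  have EΦ := root Φq hneΦ hrΦ
  -- derivative computation: deriv ψ r * (ρ+r)^2 = (3c r² + 2b r + d) * (ρ+r)
  have der : ∀ r : ℝ, ρ + r ≠ 0 →
      c * r ^ 3 + b * r ^ 2 + d * r + e = 0 →
      deriv (fun x : ℝ => σ ^ 2 / 2 * x ^ 2 + μ * x - a * x / (ρ + x)) r * (ρ + r) ^ 2
        = (3 * c * r ^ 2 + 2 * b * r + d) * (ρ + r) := by
    intro r hne hEr
    rw [(deriv_psi σ μ a ρ r hne).deriv]
    have hsq : (ρ + r) ^ 2 ≠ 0 := pow_ne_zero _ hne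
    have hkey : (σ ^ 2 * r + μ - a * ρ / (ρ + r) ^ 2) * (ρ + r) ^ 2
        = (σ ^ 2 * r + μ) * (ρ + r) ^ 2 - a * ρ := by
      field_simp
    rw [hkey, hc, hb, hd]
    rw [hc, hb, hd, he] at hEr
    linear_combination -hEr
  have hβα : β₀ ≠ α := by linarith
  have hβΦ : β₀ ≠ Φq := by linarith
  have hαΦ : α ≠ Φq := by linarith
  have Pβ := cubic_deriv_root c b d e β₀ α Φq hβα hβΦ hαΦ Eβ Eα EΦ
  have Pα := cubic_deriv_root c b d e α β₀ Φq hβα.symm hαΦ hβΦ Eα Eβ EΦ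
  have PΦ := cubic_deriv_root c b d e Φq β₀ α hβΦ.symm hαΦ.symm hβα EΦ Eβ Eα
  have dβ := der β₀ hneβ Eβ
  have dα := der α hneα Eα
  have dΦ := der Φq hneΦ EΦ
  rw [Pβ] at dβ
  rw [Pα] at dα
  rw [PΦ] at dΦ
  refine ⟨?_, ?_, ?_⟩
  · have hs : (0:ℝ) < (ρ + β₀) ^ 2 := by positivity
    have hp : 0 < c * (α - β₀) * (Φq - β₀) * (-(ρ + β₀)) :=
      mul_pos (mul_pos (mul_pos hcpos (by linarith)) (by linarith)) (by linarith)
    have hneg : c * (β₀ - α) * (β₀ - Φq) * (ρ + β₀) < 0 := by nlinarith [hp]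
    rw [← dβ] at hneg
    by_contra h
    push_neg at h
    exact absurd hneg (not_lt.mpr (mul_nonneg h hs.le))
  · have hs : (0:ℝ) < (ρ + α) ^ 2 := by positivity
    have hp : 0 < c * (α - β₀) * (Φq - α) * (ρ + α) :=
      mul_pos (mul_pos (mul_pos hcpos (by linarith)) (by linarith)) (by linarith)
    have hneg : c * (α - β₀) * (α - Φq) * (ρ + α) < 0 := by nlinarith [hp]
    rw [← dα] at hneg
    by_contra h
    push_neg at h
    exact absurd hneg (not_lt.mpr (mul_nonneg h hs.le))
  · have hs : (0:ℝ) < (ρ + Φq) ^ 2 := by positivity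
    have hp : 0 < c * (Φq - β₀) * (Φq - α) * (ρ + Φq) :=
      mul_pos (mul_pos (mul_pos hcpos (by linarith)) (by linarith)) (by linarith)
    rw [← dΦ] at hp
    by_contra h
    push_neg at h
    exact absurd hp (not_lt.mpr (mul_nonpos_of_nonpos_of_nonneg h hs.le))
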